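/- For every t > 0 and every d ≥ 0, the function s ↦ s e^{−s²/(4t)} (cosh s − cosh d)^{−1/2} is integrable on (d, ∞); in particular the integral defining the hyperbolic heat kernel H(t,z,z') is finite for all t > 0 and z, z' ∈ ℍ². -/

import Mathlib

open MeasureTheory Real Set

/-- Inverse hyperbolic cosine. -/
noncomputable def arcoshR (x : ℝ) : ℝ := Real.log (x + Real.sqrt (x ^ 2 - 1))

/-- The hyperbolic half-plane, as a subset of `ℝ × ℝ`. -/
def H2 : Set (ℝ × ℝ) := {z | 0 < z.2}

/-- The geodesic distance on the hyperbolic half-plane. -/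
noncomputable def hypDist (z z' : ℝ × ℝ) : ℝ :=
  arcoshR (1 + ((z.1 - z'.1) ^ 2 + (z.2 - z'.2) ^ 2) / (2 * z.2 * z'.2))

/-- The heat kernel of the hyperbolic half-plane. -/
noncomputable def heatH (t : ℝ) (z z' : ℝ × ℝ) : ℝ :=
  Real.sqrt 2 / (4 * Real.pi * t) ^ ((3 : ℝ) / 2) * Real.exp (-t / 4) *
    ∫ s in Set.Ioi (hypDist z z'),
      s * Real.exp (-s ^ 2 / (4 * t)) / Real.sqrt (Real.cosh s - Real.cosh (hypDist z z'))

/-- Lower bound `cosh s - cosh d ≥ s (s - d) / 2` for `0 ≤ d < s`. -/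
lemma cosh_sub_cosh_lb {d s : ℝ} (hd : 0 ≤ d) (hs : d < s) :
    s * (s - d) / 2 ≤ Real.cosh s - Real.cosh d := by
  set a := (s + d) / 2 with ha
  set b := (s - d) / 2 with hb
  have ha0 : 0 ≤ a := by rw [ha]; linarith
  have hb0 : 0 ≤ b := by rw [hb]; linarith
  have hsa : Real.cosh s - Real.cosh d = 2 * Real.sinh a * Real.sinh b := by
    have h1 : s = a + b := by rw [ha, hb]; ring
    have h2 : d = a - b := by rw [ha, hb]; ring
    rw [h1, h2, Real.cosh_add, Real.cosh_sub]; ring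
  have hA : a ≤ Real.sinh a := Real.self_le_sinh_iff.mpr ha0
  have hB : b ≤ Real.sinh b := Real.self_le_sinh_iff.mpr hb0
  rw [hsa]
  nlinarith [Real.sinh_nonneg_iff.mpr ha0, Real.sinh_nonneg_iff.mpr hb0]

lemma key_integrable {t : ℝ} (ht : 0 < t) {d : ℝ} (hd : 0 ≤ d) :
    IntegrableOn
      (fun s => s * Real.exp (-s ^ 2 / (4 * t)) / Real.sqrt (Real.cosh s - Real.cosh d))
      (Set.Ioi d) := by
  have hm : Measurable fun s : ℝ =>
      s * Real.exp (-s ^ 2 / (4 * t)) / Real.sqrt (Real.cosh s - Real.cosh d) := by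
    fun_prop
  rw [← Ioc_union_Ioi_eq_Ioi (by linarith : d ≤ d + 1)]
  apply IntegrableOn.union
  · -- near the singularity at s = d
    have hint : IntegrableOn
        (fun s : ℝ => Real.sqrt 2 * Real.sqrt (d + 1) * (s - d) ^ (-1/2 : ℝ))
        (Ioc d (d + 1)) := by
      apply Integrable.const_mul
      have h0 := (intervalIntegral.intervalIntegrable_rpow'
        (by norm_num : (-1 : ℝ) < -1/2) (a := 0) (b := 1)).comp_sub_right d
      have h1 : IntervalIntegrable (fun x : ℝ => (x - d) ^ (-1/2 : ℝ)) volume d (d + 1) := by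
        simpa [zero_add, add_comm] using h0
      exact (intervalIntegrable_iff_integrableOn_Ioc_of_le (by linarith)).mp h1
    apply Integrable.mono' hint hm.aestronglyMeasurable
    filter_upwards [ae_restrict_mem measurableSet_Ioc] with s hs
    obtain ⟨hs1, hs2⟩ := hs
    have hspos : 0 < s := lt_of_le_of_lt hd hs1
    have hsd : 0 < s - d := by linarith
    have hX : s * (s - d) / 2 ≤ Real.cosh s - Real.cosh d := cosh_sub_cosh_lb hd hs1
    have hE : Real.exp (-s ^ 2 / (4 * t)) ≤ 1 := by
      apply Real.exp_le_one_iff.mpr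
      rw [div_nonpos_iff]
      exact Or.inr ⟨neg_nonpos.mpr (sq_nonneg s), by positivity⟩
    have hsq : Real.sqrt (s * (s - d) / 2) =
        Real.sqrt s * Real.sqrt (s - d) / Real.sqrt 2 := by
      rw [Real.sqrt_div (by positivity), Real.sqrt_mul hspos.le]
    have hdenpos : 0 < Real.sqrt s * Real.sqrt (s - d) / Real.sqrt 2 := by positivity
    have hden : Real.sqrt s * Real.sqrt (s - d) / Real.sqrt 2 ≤
        Real.sqrt (Real.cosh s - Real.cosh d) := by
      rw [← hsq]; exact Real.sqrt_le_sqrt hX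
    have hrw : (s - d) ^ (-1/2 : ℝ) = 1 / Real.sqrt (s - d) := by
      rw [show (-1/2 : ℝ) = -(1/2) by norm_num, Real.rpow_neg hsd.le,
        ← Real.sqrt_eq_rpow, one_div]
    have hnorm : ‖s * Real.exp (-s ^ 2 / (4 * t)) /
        Real.sqrt (Real.cosh s - Real.cosh d)‖ =
        s * Real.exp (-s ^ 2 / (4 * t)) / Real.sqrt (Real.cosh s - Real.cosh d) := by
      rw [Real.norm_eq_abs, abs_of_nonneg]; positivity
    rw [hnorm, hrw]
    have hss : Real.sqrt s * Real.sqrt s = s := Real.mul_self_sqrt hspos.le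
    have hstep1 : s * Real.exp (-s ^ 2 / (4 * t)) /
        Real.sqrt (Real.cosh s - Real.cosh d) ≤
        s * 1 / (Real.sqrt s * Real.sqrt (s - d) / Real.sqrt 2) := by
      apply div_le_div₀ (by positivity)
        (by nlinarith [Real.exp_pos (-s ^ 2 / (4 * t))]) hdenpos hden
    have hstep2 : s * 1 / (Real.sqrt s * Real.sqrt (s - d) / Real.sqrt 2) =
        Real.sqrt 2 * Real.sqrt s / Real.sqrt (s - d) := by
      rw [mul_one]
      have h2 : Real.sqrt (s - d) ≠ 0 := by positivity
      have h3 : Real.sqrt s ≠ 0 := by positivity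
      have h4 : Real.sqrt 2 ≠ 0 := by positivity
      field_simp
      linear_combination (-1 : ℝ) * hss
    have hstep3 : Real.sqrt 2 * Real.sqrt s / Real.sqrt (s - d) ≤
        Real.sqrt 2 * Real.sqrt (d + 1) * (1 / Real.sqrt (s - d)) := by
      rw [mul_one_div]
      gcongr
    calc s * Real.exp (-s ^ 2 / (4 * t)) / Real.sqrt (Real.cosh s - Real.cosh d)
        ≤ s * 1 / (Real.sqrt s * Real.sqrt (s - d) / Real.sqrt 2) := hstep1
      _ = Real.sqrt 2 * Real.sqrt s / Real.sqrt (s - d) := hstep2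
      _ ≤ Real.sqrt 2 * Real.sqrt (d + 1) * (1 / Real.sqrt (s - d)) := hstep3
  · -- the tail
    have hg : Integrable (fun x : ℝ => Real.sqrt 2 * (x * Real.exp (-x ^ 2 / (4 * t)))) := by
      have hb : (0 : ℝ) < 1 / (4 * t) := by positivity
      have h0 := (integrable_mul_exp_neg_mul_sq hb).const_mul (Real.sqrt 2)
      refine h0.congr (Filter.Eventually.of_forall fun x => ?_)
      have hx : -(1 / (4 * t)) * x ^ 2 = -x ^ 2 / (4 * t) := by ring
      simp only [hx]
    apply Integrable.mono' hg.integrableOn hm.aestronglyMeasurable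
    filter_upwards [ae_restrict_mem measurableSet_Ioi] with s hs
    have hs1 : d < s := by simp only [mem_Ioi] at hs; linarith
    have hspos : 0 < s := lt_of_le_of_lt hd hs1
    have hX : s * (s - d) / 2 ≤ Real.cosh s - Real.cosh d := cosh_sub_cosh_lb hd hs1
    simp only [mem_Ioi] at hs
    have h12 : (1 : ℝ) / 2 ≤ Real.cosh s - Real.cosh d := by nlinarith
    have hXs : Real.sqrt (1 / 2) ≤ Real.sqrt (Real.cosh s - Real.cosh d) :=
      Real.sqrt_le_sqrt h12
    have h2pos : (0 : ℝ) < Real.sqrt (1 / 2) := by positivity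
    have hnorm : ‖s * Real.exp (-s ^ 2 / (4 * t)) /
        Real.sqrt (Real.cosh s - Real.cosh d)‖ =
        s * Real.exp (-s ^ 2 / (4 * t)) / Real.sqrt (Real.cosh s - Real.cosh d) := by
      rw [Real.norm_eq_abs, abs_of_nonneg]; positivity
    rw [hnorm]
    have h2 : Real.sqrt 2 * Real.sqrt (1 / 2) = 1 := by
      rw [← Real.sqrt_mul (by norm_num : (0 : ℝ) ≤ 2)]; norm_num
    calc s * Real.exp (-s ^ 2 / (4 * t)) / Real.sqrt (Real.cosh s - Real.cosh d)
        ≤ s * Real.exp (-s ^ 2 / (4 * t)) / Real.sqrt (1 / 2) := by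
          gcongr
      _ = Real.sqrt 2 * (s * Real.exp (-s ^ 2 / (4 * t))) := by
          rw [div_eq_iff (ne_of_gt h2pos)]
          linear_combination (-(s * Real.exp (-s ^ 2 / (4 * t)))) * h2

/-- The integrand in the definition of the hyperbolic heat kernel is integrable on `(d, ∞)`;
in particular the integral defining `H(t,z,z')` is finite for all `t > 0` and `z, z' ∈ ℍ²`. -/
theorem heat_kernel_integrand_integrable (t : ℝ) (ht : 0 < t) :
    (∀ d : ℝ, 0 ≤ d →
      IntegrableOn
        (fun s => s * Real.exp (-s ^ 2 / (4 * t)) / Real.sqrt (Real.cosh s - Real.cosh d))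
        (Set.Ioi d)) ∧
    (∀ z z' : ℝ × ℝ, z ∈ H2 → z' ∈ H2 →
      IntegrableOn
        (fun s => s * Real.exp (-s ^ 2 / (4 * t)) /
          Real.sqrt (Real.cosh s - Real.cosh (hypDist z z')))
        (Set.Ioi (hypDist z z'))) := by
  constructor
  · exact fun d hd => key_integrable ht hd
  · intro z z' hz hz'
    apply key_integrable ht
    have hz2 : 0 < z.2 := hz
    have hz'2 : 0 < z'.2 := hz'
    have hq : 0 ≤ ((z.1 - z'.1) ^ 2 + (z.2 - z'.2) ^ 2) / (2 * z.2 * z'.2) := by positivity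
    unfold hypDist arcoshR
    apply Real.log_nonneg
    have := Real.sqrt_nonneg
      ((1 + ((z.1 - z'.1) ^ 2 + (z.2 - z'.2) ^ 2) / (2 * z.2 * z'.2)) ^ 2 - 1)
    linarith
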